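/- Let E be a Hausdorff locally convex topological vector space, w ∈ E, and (K_n)_{n≥1} a non-increasing sequence of nonempty compact subsets of E. Then ⋂_{n≥1} [w, K_n] = [w, ⋂_{n≥1} K_n], where [w, K] := { λw + (1−λ)x : λ ∈ [0,1], x ∈ K } denotes the convex hull of the point w and the set K. -/

import Mathlib

open Topology Filter Set

noncomputable section

section Defs

variable {E : Type*} [AddCommGroup E] [Module ℝ E] [TopologicalSpace E]

/-- The canonical map from the topological dual of `E` to the weak-star dual. -/
def toWD (φ : E →L[ℝ] ℝ) : WeakDual ℝ E := φ

/-- The weak-star closed convex hull of a set of continuous linear functionals. -/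
def wcch (B : Set (E →L[ℝ] ℝ)) : Set (WeakDual ℝ E) :=
  closure (convexHull ℝ (toWD '' B))

/-- `f` is Gateaux differentiable at `x` with Gateaux-differential `f'`. -/
def HasGateauxAt (f : E → ℝ) (f' : E →L[ℝ] ℝ) (x : E) : Prop :=
  ∀ v : E, Tendsto (fun t : ℝ => (f (x + t • v) - f x - t * f' v) / t) (𝓝[>] 0) (𝓝 0)

/-- The family `C` is equi-Gateaux differentiable at `x`, with differentials given by `D`. -/
def EquiGateauxAt (C : Set (E → ℝ)) (D : (E → ℝ) → E →L[ℝ] ℝ) (x : E) : Prop :=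
  (∀ φ ∈ C, HasGateauxAt φ (D φ) x) ∧
  ∀ v : E, ∀ ε : ℝ, 0 < ε → ∃ δ : ℝ, 0 < δ ∧ ∀ t : ℝ, 0 < t → t < δ →
    ∀ φ ∈ C, |(φ (x + t • v) - φ x - t * (D φ) v) / t| ≤ ε

/-- The family `C` is equi-lower semicontinuous at `x`. -/
def EquiLscAt (C : Set (E → ℝ)) (x : E) : Prop :=
  ∀ ε : ℝ, 0 < ε → ∃ O ∈ 𝓝 x, ∀ y ∈ O, ∀ φ ∈ C, φ y - φ x > -ε

/-- `[C]^× = {x ∈ E : φ(x) ≥ 0 for all φ ∈ C}`. -/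
def polarSet (C : Set (E → ℝ)) : Set E := {x | ∀ φ ∈ C, 0 ≤ φ x}

/-- The multiplier set `T_C(x̂)`. -/
def multSet (C : Set (E → ℝ)) (D : (E → ℝ) → E →L[ℝ] ℝ) (x : E) : Set (WeakDual ℝ E) :=
  ⋂ n ∈ {n : ℕ | 1 ≤ n}, wcch (D '' {φ | φ ∈ C ∧ φ x ∈ Icc (0:ℝ) (1/(n:ℝ))})

/-- `F` is weak-admissible at `x ∈ F`, determined by `C` (with differentials `D`). -/
def WeakAdmissibleAt (F : Set E) (C : Set (E → ℝ)) (D : (E → ℝ) → E →L[ℝ] ℝ) (x : E) : Prop :=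
  x ∈ F ∧ C.Nonempty ∧ F = polarSet C ∧ EquiGateauxAt C D x ∧
    ({φ | φ ∈ C ∧ φ x ≠ 0} = ∅ ∨ EquiLscAt {φ | φ ∈ C ∧ φ x ≠ 0} x) ∧
    IsCompact (wcch (D '' C))

end Defs

section NormedDefs

variable {Y : Type*} [NormedAddCommGroup Y] [NormedSpace ℝ Y]

/-- `A` is admissible at `x ∈ A`, determined by `C` (with differentials `D`). -/
def AdmissibleAt (A : Set Y) (C : Set (Y → ℝ)) (D : (Y → ℝ) → Y →L[ℝ] ℝ) (x : Y) : Prop :=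
  x ∈ A ∧ C.Nonempty ∧ A = polarSet C ∧ EquiGateauxAt C D x ∧
    (∃ r : NNReal, ∃ ε : ℝ, 0 < ε ∧ ∀ φ ∈ C, LipschitzOnWith r φ (Metric.ball x ε)) ∧
    toWD (0 : Y →L[ℝ] ℝ) ∉ wcch (D '' C)

/-- The recession cone of a set. -/
def recCone (K : Set Y) : Set Y := {v | ∀ l : ℝ, 0 < l → ∀ x ∈ K, x + l • v ∈ K}

/-- The barrier cone of `K`: functionals bounded above on `K`. -/
def barCone (K : Set Y) : Set (Y →L[ℝ] ℝ) := {φ | BddAbove (φ '' K)}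

/-- The dual positive cone `A*`. -/
def posDualCone (A : Set Y) : Set (Y →L[ℝ] ℝ) := {φ | ∀ y ∈ A, 0 ≤ φ y}

end NormedDefs

/-- For `w ∈ E` and a non-increasing sequence `(K_n)_{n ≥ 1}` of nonempty
compact subsets of a Hausdorff locally convex space `E`, one has
`⋂_{n≥1} [w, K_n] = [w, ⋂_{n≥1} K_n]`, where `[w, K] = {λw + (1−λ)x : λ ∈ [0,1], x ∈ K}`. -/
theorem iInter_segment_hull_eq
    {E : Type*} [AddCommGroup E] [Module ℝ E] [TopologicalSpace E]
    [IsTopologicalAddGroup E] [ContinuousSMul ℝ E] [LocallyConvexSpace ℝ E] [T2Space E]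
    (w : E) (K : ℕ → Set E)
    (hne : ∀ n, (K n).Nonempty) (hcpt : ∀ n, IsCompact (K n)) (hmono : Antitone K) :
    (⋂ n ∈ {n : ℕ | 1 ≤ n},
        {y : E | ∃ l ∈ Icc (0:ℝ) 1, ∃ x ∈ K n, y = l • w + (1 - l) • x})
      = {y : E | ∃ l ∈ Icc (0:ℝ) 1, ∃ x ∈ ⋂ n ∈ {n : ℕ | 1 ≤ n}, K n,
          y = l • w + (1 - l) • x} := by
  ext y
  simp only [mem_iInter, mem_setOf_eq]
  constructor
  · intro hy
    set T : ℕ → Set (ℝ × E) :=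
      fun n => (Icc (0:ℝ) 1 ×ˢ K (n+1)) ∩
        {p : ℝ × E | y = p.1 • w + (1 - p.1) • p.2} with hT
    have hclosed : IsClosed {p : ℝ × E | y = p.1 • w + (1 - p.1) • p.2} := by
      have hc : Continuous fun p : ℝ × E => p.1 • w + (1 - p.1) • p.2 :=
        (continuous_fst.smul continuous_const).add
          ((continuous_const.sub continuous_fst).smul continuous_snd)
      have : {p : ℝ × E | y = p.1 • w + (1 - p.1) • p.2} =
          (fun p : ℝ × E => p.1 • w + (1 - p.1) • p.2) ⁻¹' {y} := by
        ext p; simp [eq_comm]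
      rw [this]
      exact IsClosed.preimage hc isClosed_singleton
    have hTc : ∀ n, IsCompact (T n) := fun n =>
      ((isCompact_Icc.prod (hcpt (n+1)))).inter_right hclosed
    have hTcl : ∀ n, IsClosed (T n) := fun n =>
      ((isClosed_Icc.prod (hcpt (n+1)).isClosed)).inter hclosed
    have hTn : ∀ n, (T n).Nonempty := by
      intro n
      obtain ⟨l, hl, x, hx, hyx⟩ := hy (n+1) (Nat.le_add_left 1 n)
      exact ⟨(l, x), ⟨⟨hl, hx⟩, hyx⟩⟩
    have hTa : Antitone T := by
      intro m n hmn
      exact inter_subset_inter_left _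
        (prod_mono_right (hmono (Nat.add_le_add_right hmn 1)))
    obtain ⟨⟨l, x⟩, hp⟩ :=
      IsCompact.nonempty_iInter_of_directed_nonempty_isCompact_isClosed T
        hTa.directed_ge hTn hTc hTcl
    have hp' : ∀ n, (l, x) ∈ T n := fun n => mem_iInter.mp hp n
    refine ⟨l, (hp' 0).1.1, x, ?_, (hp' 0).2⟩
    intro n hn
    obtain ⟨m, rfl⟩ := Nat.exists_eq_add_of_le hn
    simpa [Nat.add_comm] using (hp' m).1.2
  · rintro ⟨l, hl, x, hx, rfl⟩ n hn
    exact ⟨l, hl, x, hx n hn, rfl⟩
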